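/- Let G be a finite ℤ-gain graph that is (2,3,1)-sparse, and let H and K be (2,3,1)-tight subgraphs of G such that at least one of H, K is balanced and H ∩ K has at least one edge. Then H ∪ K is (2,3,1)-tight. -/

import Mathlib

/-- A `ℤ`-gain graph: a multigraph with source and target maps together with a
gain map into `ℤ`. -/
structure GainGraph (V : Type*) (E : Type*) where
  src : E → V
  tgt : E → V
  gain : E → ℤ

/-- A subgraph of a gain graph: subsets of vertices and edges such that the
endvertices of each chosen edge are chosen. -/
structure GainGraph.Subgraph {V E : Type*} (G : GainGraph V E) where
  verts : Set V
  edges : Set E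
  src_mem : ∀ e ∈ edges, G.src e ∈ verts
  tgt_mem : ∀ e ∈ edges, G.tgt e ∈ verts

namespace GainGraph

variable {V E : Type*} {G : GainGraph V E}

/-- The union of two subgraphs, taken componentwise. -/
def Subgraph.union (H K : G.Subgraph) : G.Subgraph where
  verts := H.verts ∪ K.verts
  edges := H.edges ∪ K.edges
  src_mem := by
    rintro e (he | he)
    exacts [Or.inl (H.src_mem e he), Or.inr (K.src_mem e he)]
  tgt_mem := by
    rintro e (he | he)
    exacts [Or.inl (H.tgt_mem e he), Or.inr (K.tgt_mem e he)]

/-- The intersection of two subgraphs, taken componentwise. -/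
def Subgraph.inter (H K : G.Subgraph) : G.Subgraph where
  verts := H.verts ∩ K.verts
  edges := H.edges ∩ K.edges
  src_mem := fun e he => ⟨H.src_mem e he.1, K.src_mem e he.2⟩
  tgt_mem := fun e he => ⟨H.tgt_mem e he.1, K.tgt_mem e he.2⟩

/-- The whole gain graph, viewed as a subgraph of itself. -/
def top (G : GainGraph V E) : G.Subgraph where
  verts := Set.univ
  edges := Set.univ
  src_mem := fun _ _ => Set.mem_univ _
  tgt_mem := fun _ _ => Set.mem_univ _

/-- Walks in a subgraph `H` of a gain graph, traversing edges of `H` either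
forwards or backwards. -/
inductive Walk (G : GainGraph V E) (H : G.Subgraph) : V → V → Type _
  | nil (v : V) (hv : v ∈ H.verts) : Walk G H v v
  | fwd (e : E) (he : e ∈ H.edges) {v : V} (w : Walk G H (G.tgt e) v) :
      Walk G H (G.src e) v
  | bwd (e : E) (he : e ∈ H.edges) {v : V} (w : Walk G H (G.src e) v) :
      Walk G H (G.tgt e) v

/-- The gain of a walk: the sum of the gains of the edges traversed forwards
minus the sum of the gains of the edges traversed backwards. -/
def Walk.gainSum {H : G.Subgraph} : ∀ {u v : V}, Walk G H u v → ℤ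
  | _, _, .nil _ _ => 0
  | _, _, .fwd e _ w => G.gain e + w.gainSum
  | _, _, .bwd e _ w => -G.gain e + w.gainSum

/-- A subgraph is balanced if every closed walk in it has gain `0`. -/
def Subgraph.Balanced (H : G.Subgraph) : Prop :=
  ∀ (v : V) (w : Walk G H v v), w.gainSum = 0

/-- A subgraph is connected if it is nonempty and any two of its vertices are
joined by a walk in it. -/
def Subgraph.Connected (H : G.Subgraph) : Prop :=
  H.verts.Nonempty ∧ ∀ u ∈ H.verts, ∀ v ∈ H.verts, Nonempty (Walk G H u v)

/-- The count `f(H) = 2|V(H)| - |E(H)|` of a subgraph. -/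
noncomputable def fCount (H : G.Subgraph) : ℤ :=
  2 * (H.verts.ncard : ℤ) - (H.edges.ncard : ℤ)

/-- A gain graph is `(2,3,l)`-sparse if `f(H) ≥ l` for every nonempty
subgraph `H` and `f(K) ≥ 3` for every balanced subgraph `K` with at least one
edge. -/
def Sparse (l : ℤ) (G : GainGraph V E) : Prop :=
  (∀ H : G.Subgraph, H.verts.Nonempty → l ≤ fCount H) ∧
  (∀ H : G.Subgraph, H.Balanced → H.edges.Nonempty → 3 ≤ fCount H)

/-- A subgraph `H` of a `(2,3,l)`-sparse gain graph is `(2,3,l)`-tight if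
`f(H) = l`, or `H` is balanced with `f(H) = 3`, or `H` is a single isolated
vertex. -/
def Subgraph.Tight (l : ℤ) (H : G.Subgraph) : Prop :=
  fCount H = l ∨ (H.Balanced ∧ fCount H = 3) ∨
    (∃ v, H.verts = {v} ∧ H.edges = ∅)

end GainGraph


section Aux

namespace GainGraph

variable {V E : Type*} {G : GainGraph V E}

/-- Concatenation of walks. -/
def Walk.append {L : G.Subgraph} :
    ∀ {u v w : V}, Walk G L u v → Walk G L v w → Walk G L u w
  | _, _, _, .nil _ _, q => q
  | _, _, _, .fwd e he p, q => .fwd e he (p.append q)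
  | _, _, _, .bwd e he p, q => .bwd e he (p.append q)

lemma Walk.gainSum_append {L : G.Subgraph} :
    ∀ {u v w : V} (p : Walk G L u v) (q : Walk G L v w),
      (p.append q).gainSum = p.gainSum + q.gainSum
  | _, _, _, .nil _ _, q => by simp [Walk.append, Walk.gainSum]
  | _, _, _, .fwd e he p, q => by
      rw [Walk.append, Walk.gainSum, Walk.gainSum, gainSum_append p q]; ring
  | _, _, _, .bwd e he p, q => by
      rw [Walk.append, Walk.gainSum, Walk.gainSum, gainSum_append p q]; ring

/-- Reversal of walks. -/
def Walk.reverse {L : G.Subgraph} : ∀ {u v : V}, Walk G L u v → Walk G L v u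
  | _, _, .nil v hv => .nil v hv
  | _, _, .fwd e he p => p.reverse.append (.bwd e he (.nil _ (L.src_mem e he)))
  | _, _, .bwd e he p => p.reverse.append (.fwd e he (.nil _ (L.tgt_mem e he)))

lemma Walk.gainSum_reverse {L : G.Subgraph} :
    ∀ {u v : V} (p : Walk G L u v), p.reverse.gainSum = -p.gainSum
  | _, _, .nil v hv => by simp [Walk.reverse, Walk.gainSum]
  | _, _, .fwd e he p => by
      rw [Walk.reverse, Walk.gainSum_append, gainSum_reverse p]
      simp [Walk.gainSum]
  | _, _, .bwd e he p => by
      rw [Walk.reverse, Walk.gainSum_append, gainSum_reverse p]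
      simp [Walk.gainSum]

/-- Pushing a walk to a larger subgraph. -/
def Walk.map {L M : G.Subgraph} (hv : L.verts ⊆ M.verts) (he : L.edges ⊆ M.edges) :
    ∀ {u v : V}, Walk G L u v → Walk G M u v
  | _, _, .nil v h => .nil v (hv h)
  | _, _, .fwd e h p => .fwd e (he h) (p.map hv he)
  | _, _, .bwd e h p => .bwd e (he h) (p.map hv he)

lemma Walk.gainSum_map {L M : G.Subgraph} (hv : L.verts ⊆ M.verts)
    (he : L.edges ⊆ M.edges) :
    ∀ {u v : V} (p : Walk G L u v), (p.map hv he).gainSum = p.gainSum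
  | _, _, .nil v h => rfl
  | _, _, .fwd e h p => by rw [Walk.map, Walk.gainSum, Walk.gainSum, gainSum_map hv he p]
  | _, _, .bwd e h p => by rw [Walk.map, Walk.gainSum, Walk.gainSum, gainSum_map hv he p]

lemma Subgraph.Balanced.mono {L M : G.Subgraph} (hM : M.Balanced)
    (hv : L.verts ⊆ M.verts) (he : L.edges ⊆ M.edges) : L.Balanced := fun v w => by
  rw [← Walk.gainSum_map hv he w]; exact hM v (w.map hv he)

/-- Change the starting point of a walk along an equality. -/
def Walk.copy {L : G.Subgraph} {u u' v : V} (h : u = u') (w : Walk G L u v) :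
    Walk G L u' v := h ▸ w

lemma Walk.gainSum_copy {L : G.Subgraph} {u u' v : V} (h : u = u')
    (w : Walk G L u v) : (w.copy h).gainSum = w.gainSum := by
  cases h; rfl

lemma gainSum_potential {L : G.Subgraph} {θ : V → ℤ}
    (hθ : ∀ e ∈ L.edges, G.gain e = θ (G.tgt e) - θ (G.src e)) :
    ∀ {u v : V} (w : Walk G L u v), w.gainSum = θ v - θ u
  | _, _, .nil v hv => by simp [Walk.gainSum]
  | _, _, .fwd e he p => by
      rw [Walk.gainSum, gainSum_potential hθ p, hθ e he]; ring
  | _, _, .bwd e he p => by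
      rw [Walk.gainSum, gainSum_potential hθ p, hθ e he]; ring

lemma balanced_of_potential {L : G.Subgraph} {θ : V → ℤ}
    (hθ : ∀ e ∈ L.edges, G.gain e = θ (G.tgt e) - θ (G.src e)) :
    L.Balanced := fun v w => by rw [gainSum_potential hθ w]; ring

lemma Subgraph.Balanced.gainSum_eq {L : G.Subgraph} (hL : L.Balanced) {u v : V}
    (w₁ w₂ : Walk G L u v) : w₁.gainSum = w₂.gainSum := by
  have h := hL u (w₁.append w₂.reverse)
  rw [Walk.gainSum_append, Walk.gainSum_reverse] at h
  linarith

/-- A balanced subgraph admits a potential function. -/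
lemma Subgraph.Balanced.exists_potential {L : G.Subgraph} (hL : L.Balanced) :
    ∃ θ : V → ℤ, ∀ e ∈ L.edges, G.gain e = θ (G.tgt e) - θ (G.src e) := by
  classical
  letI s : Setoid L.verts :=
    ⟨fun x y => Nonempty (Walk G L x y),
      ⟨fun x => ⟨Walk.nil x.1 x.2⟩, fun ⟨w⟩ => ⟨w.reverse⟩,
        fun ⟨w⟩ ⟨w'⟩ => ⟨w.append w'⟩⟩⟩
  have hrep : ∀ (v : V) (h : v ∈ L.verts),
      Nonempty (Walk G L ((Quotient.out (s := s) ⟦⟨v, h⟩⟧ : L.verts) : V) v) :=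
    fun v h => Quotient.exact (Quotient.out_eq (s := s) ⟦⟨v, h⟩⟧)
  refine ⟨fun v => if h : v ∈ L.verts then ((hrep v h).some).gainSum else 0,
    fun e he => ?_⟩
  have hs := L.src_mem e he
  have ht := L.tgt_mem e he
  beta_reduce
  rw [dif_pos hs, dif_pos ht]
  have key : (⟦(⟨G.src e, hs⟩ : L.verts)⟧ : Quotient s) = ⟦⟨G.tgt e, ht⟩⟧ :=
    Quotient.sound ⟨.fwd e he (.nil _ ht)⟩
  have hb : ((Quotient.out (s := s) ⟦⟨G.src e, hs⟩⟧ : L.verts) : V)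
      = ((Quotient.out (s := s) ⟦⟨G.tgt e, ht⟩⟧ : L.verts) : V) := by rw [key]
  have hval := hL.gainSum_eq
    (((hrep _ hs).some.copy hb).append (.fwd e he (.nil _ ht))) (hrep _ ht).some
  rw [Walk.gainSum_append, Walk.gainSum_copy] at hval
  simp only [Walk.gainSum] at hval
  linarith

lemma Subgraph.ext' {H K : G.Subgraph} (hv : H.verts = K.verts)
    (he : H.edges = K.edges) : H = K := by
  cases H; cases K; simp_all

lemma fCount_union_add_inter [Fintype V] [Fintype E] (H K : G.Subgraph) :
    fCount (H.union K) + fCount (H.inter K) = fCount H + fCount K := by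
  have hv := Set.ncard_union_add_ncard_inter H.verts K.verts
    (Set.toFinite _) (Set.toFinite _)
  have he := Set.ncard_union_add_ncard_inter H.edges K.edges
    (Set.toFinite _) (Set.toFinite _)
  have hv' : ((H.verts ∪ K.verts).ncard : ℤ) + (H.verts ∩ K.verts).ncard
      = H.verts.ncard + K.verts.ncard := by exact_mod_cast hv
  have he' : ((H.edges ∪ K.edges).ncard : ℤ) + (H.edges ∩ K.edges).ncard
      = H.edges.ncard + K.edges.ncard := by exact_mod_cast he
  simp only [fCount, Subgraph.union, Subgraph.inter]
  linarith

/-- The key asymmetric form of Statement 17. -/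
lemma stmt_17_aux {V E : Type*} [Fintype V] [Fintype E] {G : GainGraph V E}
    (hsp : Sparse 1 G) (H K : G.Subgraph)
    (hH : H.Tight 1) (hK : K.Tight 1) (hHbal : H.Balanced)
    (hedge : (H.inter K).edges.Nonempty) : (H.union K).Tight 1 := by
  classical
  obtain ⟨e₀, he₀⟩ := hedge
  have he₀H : e₀ ∈ H.edges := he₀.1
  have he₀K : e₀ ∈ K.edges := he₀.2
  have hIbal : (H.inter K).Balanced :=
    hHbal.mono Set.inter_subset_left Set.inter_subset_left
  have hfI : 3 ≤ fCount (H.inter K) := hsp.2 _ hIbal ⟨e₀, he₀⟩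
  have hfH : fCount H = 3 := by
    rcases hH with h1 | ⟨_, h3⟩ | ⟨v, hv, hem⟩
    · have := hsp.2 H hHbal ⟨e₀, he₀H⟩; linarith
    · exact h3
    · rw [hem] at he₀H; exact absurd he₀H (Set.notMem_empty e₀)
  have hUne : (H.union K).verts.Nonempty :=
    ⟨G.src e₀, Or.inl (H.src_mem e₀ he₀H)⟩
  have hU1 : 1 ≤ fCount (H.union K) := hsp.1 _ hUne
  have hmod := fCount_union_add_inter H K
  rcases hK with h1 | ⟨hKbal, h3⟩ | ⟨v, hv, hem⟩
  · left; linarith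
  · -- both balanced
    by_cases hconn : ∀ v ∈ (H.inter K).verts,
        Nonempty (Walk G (H.inter K) (G.src e₀) v)
    · -- the intersection is connected: the union is balanced
      obtain ⟨θH, hθH⟩ := hHbal.exists_potential
      obtain ⟨θK, hθK⟩ := hKbal.exists_potential
      have hb0 : G.src e₀ ∈ (H.inter K).verts := (H.inter K).src_mem e₀ he₀
      have hd : ∀ v ∈ (H.inter K).verts,
          θH v - θK v = θH (G.src e₀) - θK (G.src e₀) := by
        intro v hv
        obtain ⟨w⟩ := hconn v hv
        have h1 : w.gainSum = θH v - θH (G.src e₀) := by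
          rw [← Walk.gainSum_map (M := H) Set.inter_subset_left
            Set.inter_subset_left w]
          exact gainSum_potential hθH _
        have h2 : w.gainSum = θK v - θK (G.src e₀) := by
          rw [← Walk.gainSum_map (M := K) Set.inter_subset_right
            Set.inter_subset_right w]
          exact gainSum_potential hθK _
        linarith
      have hbalU : (H.union K).Balanced := by
        apply balanced_of_potential
          (θ := fun v => if v ∈ H.verts then θH v
            else θK v + (θH (G.src e₀) - θK (G.src e₀)))
        intro e he
        rcases he with heH | heK
        · have h1 := H.src_mem e heH
          have h2 := H.tgt_mem e heH
          simp only [if_pos h1, if_pos h2]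
          exact hθH e heH
        · have h1 := K.src_mem e heK
          have h2 := K.tgt_mem e heK
          have key : ∀ v ∈ K.verts,
              (if v ∈ H.verts then θH v
                else θK v + (θH (G.src e₀) - θK (G.src e₀)))
              = θK v + (θH (G.src e₀) - θK (G.src e₀)) := by
            intro v hv
            split_ifs with h
            · have := hd v ⟨h, hv⟩; linarith
            · rfl
          rw [key _ h2, key _ h1, hθK e heK]
          ring
      have h3le : 3 ≤ fCount (H.union K) :=
        hsp.2 _ hbalU ⟨e₀, Or.inl he₀H⟩
      right; left
      exact ⟨hbalU, by linarith⟩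
    · -- the intersection is disconnected: f(H ∩ K) ≥ 5
      push_neg at hconn
      obtain ⟨v₀, hv₀, hnw⟩ := hconn
      set I := H.inter K with hI
      set R : Set V := {v | v ∈ I.verts ∧ Nonempty (Walk G I (G.src e₀) v)}
        with hR
      have hRsub : R ⊆ I.verts := fun v hv => hv.1
      let L₁ : G.Subgraph :=
        { verts := R
          edges := {e | e ∈ I.edges ∧ G.src e ∈ R}
          src_mem := fun e he => he.2
          tgt_mem := fun e he =>
            ⟨I.tgt_mem e he.1,
              ⟨he.2.2.some.append (.fwd e he.1 (.nil _ (I.tgt_mem e he.1)))⟩⟩ }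
      let L₂ : G.Subgraph :=
        { verts := I.verts \ R
          edges := {e | e ∈ I.edges ∧ G.src e ∉ R}
          src_mem := fun e he => ⟨I.src_mem e he.1, he.2⟩
          tgt_mem := fun e he => by
            refine ⟨I.tgt_mem e he.1, fun ht => he.2 ?_⟩
            exact ⟨I.src_mem e he.1,
              ⟨ht.2.some.append (.bwd e he.1 (.nil _ (I.src_mem e he.1)))⟩⟩ }
      have hvu : L₁.verts ∪ L₂.verts = I.verts := Set.union_diff_cancel' (fun _ h => h) hRsub
      have hvd : Disjoint L₁.verts L₂.verts := Set.disjoint_sdiff_right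
      have heu : L₁.edges ∪ L₂.edges = I.edges := by
        ext e; by_cases h : G.src e ∈ R <;> simp [L₁, L₂, h]
      have hed : Disjoint L₁.edges L₂.edges := by
        rw [Set.disjoint_left]; intro e h1 h2; exact h2.2 h1.2
      have hsplit : fCount I = fCount L₁ + fCount L₂ := by
        have h1 : (L₁.verts ∪ L₂.verts).ncard = L₁.verts.ncard + L₂.verts.ncard :=
          Set.ncard_union_eq hvd (Set.toFinite _) (Set.toFinite _)
        have h2 : (L₁.edges ∪ L₂.edges).ncard = L₁.edges.ncard + L₂.edges.ncard :=
          Set.ncard_union_eq hed (Set.toFinite _) (Set.toFinite _)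
        rw [hvu] at h1
        rw [heu] at h2
        simp only [fCount]
        rw [h1, h2]
        push_cast
        ring
      have hL₁sub_v : L₁.verts ⊆ H.verts := fun v hv =>
        (Set.inter_subset_left : I.verts ⊆ H.verts) (hRsub hv)
      have hL₁sub_e : L₁.edges ⊆ H.edges := fun e he =>
        (Set.inter_subset_left : I.edges ⊆ H.edges) he.1
      have hL₁bal : L₁.Balanced := hHbal.mono hL₁sub_v hL₁sub_e
      have hb0' : G.src e₀ ∈ I.verts := I.src_mem e₀ he₀
      have hfL₁ : 3 ≤ fCount L₁ :=
        hsp.2 _ hL₁bal ⟨e₀, he₀, hb0', ⟨.nil _ hb0'⟩⟩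
      have hfL₂ : 2 ≤ fCount L₂ := by
        rcases Set.eq_empty_or_nonempty L₂.edges with hem | hne
        · have hv₀' : v₀ ∈ L₂.verts := ⟨hv₀, fun h => hnw.false h.2.some⟩
          have h1 : 1 ≤ (L₂.verts.ncard : ℤ) := by
            exact_mod_cast (Set.ncard_pos (Set.toFinite _)).mpr ⟨v₀, hv₀'⟩
          have h0 : (L₂.edges.ncard : ℤ) = 0 := by rw [hem]; simp
          simp only [fCount]
          linarith
        · have hL₂bal : L₂.Balanced := hHbal.mono
            (fun v hv => (Set.inter_subset_left : I.verts ⊆ H.verts) hv.1)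
            (fun e he => (Set.inter_subset_left : I.edges ⊆ H.edges) he.1)
          have := hsp.2 _ hL₂bal hne
          linarith
      left
      linarith
  · rw [hem] at he₀K; exact absurd he₀K (Set.notMem_empty e₀)

end GainGraph

end Aux

open GainGraph

/-- In a finite `(2,3,1)`-sparse `ℤ`-gain graph, if `H` and
`K` are `(2,3,1)`-tight subgraphs, at least one of which is balanced, whose
intersection has at least one edge, then `H ∪ K` is `(2,3,1)`-tight. -/
theorem stmt_17 {V E : Type*} [Fintype V] [Fintype E] (G : GainGraph V E)
    (hsp : Sparse 1 G) (H K : G.Subgraph)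
    (hH : H.Tight 1) (hK : K.Tight 1)
    (hbal : H.Balanced ∨ K.Balanced)
    (hedge : (H.inter K).edges.Nonempty) :
    (H.union K).Tight 1 := by
  rcases hbal with hHbal | hKbal
  · exact stmt_17_aux hsp H K hH hK hHbal hedge
  · have huc : H.union K = K.union H :=
      Subgraph.ext' (Set.union_comm _ _) (Set.union_comm _ _)
    have hie : (K.inter H).edges.Nonempty := by
      obtain ⟨e, he⟩ := hedge; exact ⟨e, he.2, he.1⟩
    rw [huc]
    exact stmt_17_aux hsp K H hK hH hKbal hie
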